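/- arXiv:math/0602318 — 2 statements merged into one kernel-verified Lean document; each statement's English description precedes it below -/
import Mathlib

section
/- Let H be a bounded normal operator A on a complex Hilbert space H satisfying A² = 2μA + νI with μ² + ν ≠ 0, let λ₁, λ₂ be the (distinct) roots of z² − 2μz − ν = 0, and suppose both eigenspaces ker(A − λ₁I) and ker(A − λ₂I) are infinite-dimensional. Let c₁, …, c_k be nonzero real numbers and ‖c‖ = Σⱼ |cⱼ|. Then the c-numerical range of A is the closed line segment joining the points μ·(Σⱼ cⱼ) + ((λ₁ − λ₂)/2)·‖c‖ and μ·(Σⱼ cⱼ) − ((λ₁ − λ₂)/2)·‖c‖; that is, W_c(A) = { μ·(Σⱼ cⱼ) + t·((λ₁ − λ₂)/2)·‖c‖ : t ∈ [−1, 1] }. -/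
open scoped ComplexInnerProductSpace

lemma aux_exists_orthonormal (E : Type*) [NormedAddCommGroup E] [InnerProductSpace ℂ E]
    [CompleteSpace E] (hE : ¬ FiniteDimensional ℂ E) (k : ℕ) :
    ∃ f : Fin k → E, Orthonormal ℂ f := by
  obtain ⟨w, b, hb⟩ := exists_hilbertBasis ℂ E
  have hrange : Set.range b = w := by rw [hb]; exact Subtype.range_coe
  have hw : w.Infinite := by
    rw [Set.Infinite]
    intro hfin
    apply hE
    have h1 : (Submodule.span ℂ (Set.range b)).topologicalClosure = ⊤ := b.dense_span
    have h2 : FiniteDimensional ℂ (Submodule.span ℂ (Set.range b)) := by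
      rw [hrange]; exact FiniteDimensional.span_of_finite ℂ hfin
    have h3 : Submodule.span ℂ (Set.range b) = ⊤ := by
      rw [← h1]
      exact (Submodule.closed_of_finiteDimensional _).submodule_topologicalClosure_eq.symm
    have := h2
    rw [h3] at this
    exact (Submodule.topEquiv : (⊤ : Submodule ℂ E) ≃ₗ[ℂ] E).finiteDimensional
  refine ⟨fun j => b (hw.natEmbedding w j), ?_⟩
  exact b.orthonormal.comp _ fun i j hij => by
    have := (hw.natEmbedding w).injective hij
    exact Fin.val_injective this

lemma aux_orthonormal_in {H : Type*} [NormedAddCommGroup H] [InnerProductSpace ℂ H]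
    (K : Submodule ℂ H) [CompleteSpace K] (hK : ¬ FiniteDimensional ℂ K) (k : ℕ) :
    ∃ f : Fin k → H, Orthonormal ℂ f ∧ ∀ j, f j ∈ K := by
  obtain ⟨g, hg⟩ := aux_exists_orthonormal K hK k
  refine ⟨fun j => (g j : H), ?_, fun j => (g j).2⟩
  rw [orthonormal_iff_ite] at hg ⊢
  intro i j
  rw [← Submodule.coe_inner]
  exact hg i j

lemma aux_adjoint_eigen {H : Type*} [NormedAddCommGroup H] [InnerProductSpace ℂ H]
    [CompleteSpace H] (A : H →L[ℂ] H)
    (hnormal : ContinuousLinearMap.adjoint A ∘L A = A ∘L ContinuousLinearMap.adjoint A)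
    (lam : ℂ) (u : H) (hu : A u = lam • u) :
    ContinuousLinearMap.adjoint A u = (starRingEnd ℂ lam) • u := by
  set B := ContinuousLinearMap.adjoint A with hB
  have hcomm : ∀ x, B (A x) = A (B x) := fun x => congrFun (congrArg DFunLike.coe hnormal) x
  have k1 : ⟪u, B u⟫ = (starRingEnd ℂ lam) * ⟪u, u⟫ := by
    rw [hB, ContinuousLinearMap.adjoint_inner_right, hu, inner_smul_left]
  have k2 : ⟪B u, u⟫ = lam * ⟪u, u⟫ := by
    rw [hB, ContinuousLinearMap.adjoint_inner_left, hu, inner_smul_right]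
  have k3 : ⟪B u, B u⟫ = lam * ((starRingEnd ℂ lam) * ⟪u, u⟫) := by
    rw [hB, ContinuousLinearMap.adjoint_inner_left, ← hB, ← hcomm u, hu, map_smul,
      inner_smul_right, k1]
  have key : ⟪B u - (starRingEnd ℂ lam) • u, B u - (starRingEnd ℂ lam) • u⟫ = 0 := by
    simp only [inner_sub_left, inner_sub_right, inner_smul_left, inner_smul_right, k1, k2, k3,
      RingHomCompTriple.comp_apply, RingHom.id_apply, starRingEnd_self_apply]
    ring
  exact sub_eq_zero.mp (inner_self_eq_zero.mp key)

lemma aux_orth {H : Type*} [NormedAddCommGroup H] [InnerProductSpace ℂ H]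
    [CompleteSpace H] (A : H →L[ℂ] H)
    (hnormal : ContinuousLinearMap.adjoint A ∘L A = A ∘L ContinuousLinearMap.adjoint A)
    (lam₁ lam₂ : ℂ) (hne : lam₁ - lam₂ ≠ 0) (u v : H)
    (hu : A u = lam₁ • u) (hv : A v = lam₂ • v) : ⟪u, v⟫ = 0 := by
  have h1 : ⟪u, A v⟫ = lam₂ * ⟪u, v⟫ := by rw [hv, inner_smul_right]
  have h2 : ⟪u, A v⟫ = lam₁ * ⟪u, v⟫ := by
    rw [← ContinuousLinearMap.adjoint_inner_left, aux_adjoint_eigen A hnormal lam₁ u hu,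
      inner_smul_left, RingHomCompTriple.comp_apply, RingHom.id_apply]
  have h3 : (lam₁ - lam₂) * ⟪u, v⟫ = 0 := by
    rw [sub_mul, ← h1, ← h2, sub_self]
  exact (mul_eq_zero.mp h3).resolve_left hne

lemma aux_decomp {H : Type*} [NormedAddCommGroup H] [InnerProductSpace ℂ H]
    (A : H →L[ℂ] H) (μ ν lam₁ lam₂ : ℂ)
    (hquad : A ^ 2 = (2 * μ) • A + ν • (1 : H →L[ℂ] H))
    (hsum : lam₁ + lam₂ = 2 * μ) (hprod : lam₁ * lam₂ = -ν)
    (hne : lam₁ - lam₂ ≠ 0) (x : H) :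
    ∃ u v : H, A u = lam₁ • u ∧ A v = lam₂ • v ∧ x = u + v := by
  have hA2 : A (A x) = (2 * μ) • A x + ν • x := by
    have := congrFun (congrArg DFunLike.coe hquad) x
    simpa [pow_two, ContinuousLinearMap.mul_apply] using this
  refine ⟨(lam₁ - lam₂)⁻¹ • (A x - lam₂ • x), (lam₁ - lam₂)⁻¹ • (lam₁ • x - A x), ?_, ?_, ?_⟩
  · rw [map_smul, map_sub, map_smul, hA2]
    match_scalars
    · field_simp
      linear_combination -hsum
    · field_simp
      linear_combination hprod
  · rw [map_smul, map_sub, map_smul, hA2]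
    match_scalars
    · field_simp
      linear_combination hsum
    · field_simp
      linear_combination -hprod
  · rw [← smul_add]
    rw [show A x - lam₂ • x + (lam₁ • x - A x) = (lam₁ - lam₂) • x by module]
    rw [smul_smul, inv_mul_cancel₀ hne, one_smul]

/-- `c`-numerical range of a normal quadratic operator: if `A` is normal,
`A² = 2μA + νI` with `μ² + ν ≠ 0`, `λ₁, λ₂` are the (distinct) roots of
`z² - 2μz - ν = 0`, and both eigenspaces `ker(A - λᵢI)` are
infinite-dimensional, then `W_c(A)` is the closed line segment joining
`μ(Σcⱼ) + ((λ₁-λ₂)/2)‖c‖` and `μ(Σcⱼ) - ((λ₁-λ₂)/2)‖c‖`. -/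
theorem cNumericalRange_of_normal_quadratic
    {H : Type*} [NormedAddCommGroup H] [InnerProductSpace ℂ H] [CompleteSpace H]
    (A : H →L[ℂ] H)
    (hnormal : ContinuousLinearMap.adjoint A ∘L A = A ∘L ContinuousLinearMap.adjoint A)
    (μ ν lam₁ lam₂ : ℂ)
    (hquad : A ^ 2 = (2 * μ) • A + ν • (1 : H →L[ℂ] H))
    (hdisc : μ ^ 2 + ν ≠ 0)
    (hsum : lam₁ + lam₂ = 2 * μ) (hprod : lam₁ * lam₂ = -ν)
    (hker₁ : ¬ FiniteDimensional ℂ (LinearMap.ker ((A - lam₁ • (1 : H →L[ℂ] H) : H →L[ℂ] H) : H →ₗ[ℂ] H)))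
    (hker₂ : ¬ FiniteDimensional ℂ (LinearMap.ker ((A - lam₂ • (1 : H →L[ℂ] H) : H →L[ℂ] H) : H →ₗ[ℂ] H)))
    (k : ℕ) (c : Fin k → ℝ) (hc : ∀ j, c j ≠ 0) :
    {z : ℂ | ∃ x : Fin k → H, Orthonormal ℂ x ∧
        z = ∑ j, (c j : ℂ) * (inner ℂ (x j) (A (x j)) : ℂ)} =
      {z : ℂ | ∃ t : ℝ, t ∈ Set.Icc (-1 : ℝ) 1 ∧
        z = μ * ∑ j, (c j : ℂ) +
          (t : ℂ) * ((lam₁ - lam₂) / 2) * ((∑ j, |c j| : ℝ) : ℂ)} := by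
  have hne : lam₁ - lam₂ ≠ 0 := by
    intro h
    apply hdisc
    have h4 : (lam₁ - lam₂) ^ 2 = 4 * (μ ^ 2 + ν) := by
      linear_combination (lam₁ + lam₂ + 2 * μ) * hsum - 4 * hprod
    rw [h] at h4
    linear_combination -h4 / 4
  ext z
  simp only [Set.mem_setOf_eq]
  constructor
  · rintro ⟨x, hx, rfl⟩
    choose u v hu hv huv using fun j =>
      aux_decomp A μ ν lam₁ lam₂ hquad hsum hprod hne (x j)
    have hortho : ∀ j, ⟪u j, v j⟫ = 0 := fun j =>
      aux_orth A hnormal lam₁ lam₂ hne _ _ (hu j) (hv j)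
    have hab : ∀ j, (‖u j‖ ^ 2 + ‖v j‖ ^ 2 : ℝ) = 1 := by
      intro j
      have h1 : ‖x j‖ = 1 := hx.1 j
      have h2 : ‖x j‖ ^ 2 = ‖u j‖ ^ 2 + 2 * Complex.re ⟪u j, v j⟫ + ‖v j‖ ^ 2 := by
        rw [huv j]; exact norm_add_sq (𝕜 := ℂ) _ _
    
      rw [h1, hortho j] at h2
      simp at h2
      linarith
    have hval : ∀ j, (⟪x j, A (x j)⟫ : ℂ)
        = lam₁ * ((‖u j‖ ^ 2 : ℝ) : ℂ) + lam₂ * ((‖v j‖ ^ 2 : ℝ) : ℂ) := by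
      intro j
      have hvu : ⟪v j, u j⟫ = 0 := by
        rw [← inner_conj_symm, hortho j, map_zero]
      rw [huv j, map_add, hu j, hv j]
      simp only [inner_add_left, inner_add_right, inner_smul_right, hortho j, hvu,
        mul_zero, add_zero, zero_add, inner_self_eq_norm_sq_to_K]
      norm_cast
    set s : Fin k → ℝ := fun j => ‖u j‖ ^ 2 - ‖v j‖ ^ 2 with hs
    have hsle : ∀ j, |s j| ≤ 1 := by
      intro j
      have := hab j
      have h1 : (0:ℝ) ≤ ‖u j‖ ^ 2 := sq_nonneg _
      have h2 : (0:ℝ) ≤ ‖v j‖ ^ 2 := sq_nonneg _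
      rw [abs_le]; constructor <;> [skip; skip] <;> simp only [hs] <;> nlinarith
    set S : ℝ := ∑ j, c j * s j with hS
    set N : ℝ := ∑ j, |c j| with hN
    have hSN : |S| ≤ N := by
      calc |S| ≤ ∑ j, |c j * s j| := Finset.abs_sum_le_sum_abs _ _
        _ ≤ ∑ j, |c j| := by
            apply Finset.sum_le_sum
            intro j _
            rw [abs_mul]
            nlinarith [abs_nonneg (c j), hsle j, abs_nonneg (s j)]
    have hN0 : 0 ≤ N := Finset.sum_nonneg fun j _ => abs_nonneg _
    set t₀ : ℝ := if N = 0 then 0 else S / N with ht₀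
    have htN : t₀ * N = S := by
      rw [ht₀]
      by_cases h : N = 0
      · have hS0 : S = 0 := abs_eq_zero.mp (le_antisymm (h ▸ hSN) (abs_nonneg S))
        simp [h, hS0]
      · rw [if_neg h]
        exact div_mul_cancel₀ S h
    refine ⟨t₀, ?_, ?_⟩
    · by_cases h : N = 0
      · simp [ht₀, h]
      · have hNpos : 0 < N := lt_of_le_of_ne hN0 (Ne.symm h)
        rw [Set.mem_Icc, ← abs_le, ht₀, if_neg h, abs_div, abs_of_pos hNpos,
          div_le_one hNpos]
        exact hSN
    · have key : ∀ j, (c j : ℂ) * ⟪x j, A (x j)⟫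
          = μ * (c j : ℂ) + ((lam₁ - lam₂) / 2) * ((c j * s j : ℝ) : ℂ) := by
        intro j
        rw [hval j]
        have h1 : ((‖u j‖ ^ 2 : ℝ) : ℂ) + ((‖v j‖ ^ 2 : ℝ) : ℂ) = 1 := by
          exact_mod_cast congrArg (Complex.ofReal) (hab j)
        have h2 : ((s j : ℝ) : ℂ) = ((‖u j‖ ^ 2 : ℝ) : ℂ) - ((‖v j‖ ^ 2 : ℝ) : ℂ) := by
          simp [hs]
        push_cast
        push_cast at h1 h2
        linear_combination ((c j : ℂ)) * (lam₁ + lam₂) / 2 * h1 + (c j : ℂ) / 2 * hsum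
          - (c j : ℂ) * (lam₁ - lam₂) / 2 * h2
      have hScast : ((S : ℝ) : ℂ) = ((t₀ : ℝ) : ℂ) * ((N : ℝ) : ℂ) := by
        exact_mod_cast congrArg Complex.ofReal htN.symm
      calc ∑ j, (c j : ℂ) * ⟪x j, A (x j)⟫
          = ∑ j, (μ * (c j : ℂ) + ((lam₁ - lam₂) / 2) * ((c j * s j : ℝ) : ℂ)) :=
            Finset.sum_congr rfl fun j _ => key j
        _ = μ * ∑ j, (c j : ℂ) + ((lam₁ - lam₂) / 2) * ((S : ℝ) : ℂ) := by
            rw [Finset.sum_add_distrib, ← Finset.mul_sum, ← Finset.mul_sum, hS]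
            norm_cast
        _ = μ * ∑ j, (c j : ℂ) + ((t₀ : ℝ) : ℂ) * ((lam₁ - lam₂) / 2) * ((N : ℝ) : ℂ) := by
            rw [hScast]
            ring
  · rintro ⟨t, ht, rfl⟩
    obtain ⟨ht1, ht2⟩ := Set.mem_Icc.mp ht
    obtain ⟨e, he, heK⟩ := aux_orthonormal_in (LinearMap.ker ((A - lam₁ • (1 : H →L[ℂ] H) : H →L[ℂ] H) : H →ₗ[ℂ] H)) hker₁ k
    obtain ⟨f, hf, hfK⟩ := aux_orthonormal_in (LinearMap.ker ((A - lam₂ • (1 : H →L[ℂ] H) : H →L[ℂ] H) : H →ₗ[ℂ] H)) hker₂ k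
    have hmem : ∀ (lam : ℂ) (w : H), w ∈ LinearMap.ker ((A - lam • (1 : H →L[ℂ] H) : H →L[ℂ] H) : H →ₗ[ℂ] H) ↔
        A w = lam • w := by
      intro lam w
      rw [LinearMap.mem_ker]
      simp [sub_eq_zero]
    have hAe : ∀ j, A (e j) = lam₁ • e j := fun j => (hmem _ _).mp (heK j)
    have hAf : ∀ j, A (f j) = lam₂ • f j := fun j => (hmem _ _).mp (hfK j)
    have hef : ∀ i j, ⟪e i, f j⟫ = 0 := fun i j =>
      aux_orth A hnormal lam₁ lam₂ hne _ _ (hAe i) (hAf j)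
    have hfe : ∀ i j, ⟪f i, e j⟫ = 0 := by
      intro i j
      rw [← inner_conj_symm, hef j i, map_zero]
    set sg : Fin k → ℝ := fun j => if 0 < c j then 1 else -1 with hsg
    have hsg1 : ∀ j, c j * sg j = |c j| := by
      intro j
      by_cases h : 0 < c j
      · simp [hsg, h, abs_of_pos h]
      · have hneg : c j < 0 := lt_of_le_of_ne (not_lt.mp h) (hc j)
        simp [hsg, h, abs_of_neg hneg]
    have hsgabs : ∀ j, |sg j| = 1 := by
      intro j
      by_cases h : 0 < c j <;> simp [hsg, h]
    set a : Fin k → ℝ := fun j => (1 + t * sg j) / 2 with ha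
    set b : Fin k → ℝ := fun j => (1 - t * sg j) / 2 with hb
    have htsg : ∀ j, |t * sg j| ≤ 1 := by
      intro j
      rw [abs_mul, hsgabs j, mul_one, abs_le]
      exact ⟨ht1, ht2⟩
    have ha0 : ∀ j, 0 ≤ a j := by
      intro j
      have := abs_le.mp (htsg j)
      simp only [ha]
      linarith [this.1]
    have hb0 : ∀ j, 0 ≤ b j := by
      intro j
      have := abs_le.mp (htsg j)
      simp only [hb]
      linarith [this.2]
    have hab : ∀ j, a j + b j = 1 := by intro j; simp only [ha, hb]; ring
    set x : Fin k → H := fun j =>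
      ((Real.sqrt (a j) : ℝ) : ℂ) • e j + ((Real.sqrt (b j) : ℝ) : ℂ) • f j with hx
    have hee := orthonormal_iff_ite.mp he
    have hff := orthonormal_iff_ite.mp hf
    refine ⟨x, ?_, ?_⟩
    · rw [orthonormal_iff_ite]
      intro i j
      simp only [hx, inner_add_left, inner_add_right, inner_smul_left, inner_smul_right,
        hee, hff, hef, hfe, Complex.conj_ofReal, mul_zero, add_zero, zero_add]
      by_cases h : i = j
      · subst h
        simp only [if_pos rfl]
        have h1 : ((Real.sqrt (a i) : ℝ) : ℂ) * ((Real.sqrt (a i) : ℝ) : ℂ)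
            + ((Real.sqrt (b i) : ℝ) : ℂ) * ((Real.sqrt (b i) : ℝ) : ℂ) = 1 := by
          have : Real.sqrt (a i) * Real.sqrt (a i) + Real.sqrt (b i) * Real.sqrt (b i)
              = 1 := by
            rw [Real.mul_self_sqrt (ha0 i), Real.mul_self_sqrt (hb0 i)]
            exact hab i
          exact_mod_cast congrArg Complex.ofReal this
        simpa using h1
      · simp [h]
    · have hvalj : ∀ j, (⟪x j, A (x j)⟫ : ℂ)
          = μ + ((t * sg j : ℝ) : ℂ) * ((lam₁ - lam₂) / 2) := by
        intro j
        have hAx : A (x j) = ((Real.sqrt (a j) : ℝ) : ℂ) • (lam₁ • e j)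
            + ((Real.sqrt (b j) : ℝ) : ℂ) • (lam₂ • f j) := by
          rw [hx]
          simp only [map_add, map_smul, hAe, hAf]
        have he1 : (⟪e j, e j⟫ : ℂ) = 1 := by rw [hee]; simp
        have hf1 : (⟪f j, f j⟫ : ℂ) = 1 := by rw [hff]; simp
        have hsa : ((Real.sqrt (a j) : ℝ) : ℂ) * ((Real.sqrt (a j) : ℝ) : ℂ)
            = ((a j : ℝ) : ℂ) := by
          rw [← Complex.ofReal_mul, Real.mul_self_sqrt (ha0 j)]
        have hsb : ((Real.sqrt (b j) : ℝ) : ℂ) * ((Real.sqrt (b j) : ℝ) : ℂ)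
            = ((b j : ℝ) : ℂ) := by
          rw [← Complex.ofReal_mul, Real.mul_self_sqrt (hb0 j)]
        have hmid : (⟪x j, A (x j)⟫ : ℂ) = lam₁ * ((a j : ℝ) : ℂ) + lam₂ * ((b j : ℝ) : ℂ) := by
          rw [hAx]
          simp only [hx, inner_add_left, inner_add_right, inner_smul_left, inner_smul_right,
            Complex.conj_ofReal, hef, hfe, he1, hf1, mul_zero, add_zero, zero_add, mul_one]
          linear_combination lam₁ * hsa + lam₂ * hsb
        rw [hmid]
        have hcab : ((a j : ℝ) : ℂ) + ((b j : ℝ) : ℂ) = 1 := by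
          exact_mod_cast congrArg Complex.ofReal (hab j)
        have hcs : ((a j : ℝ) : ℂ) - ((b j : ℝ) : ℂ) = ((t * sg j : ℝ) : ℂ) := by
          have h5 : a j - b j = t * sg j := by simp only [ha, hb]; ring
          exact_mod_cast congrArg Complex.ofReal h5
        linear_combination lam₁ * (hcab + hcs) / 2 + lam₂ * (hcab - hcs) / 2 + hsum / 2
      have hcsg : ∀ j, ((c j : ℂ)) * ((t * sg j : ℝ) : ℂ) = (t : ℂ) * ((|c j| : ℝ) : ℂ) := by
        intro j
        have h6 : c j * (t * sg j) = t * |c j| := by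
          rw [← hsg1 j]; ring
        exact_mod_cast congrArg Complex.ofReal h6
      have hfin : ∑ j, (c j : ℂ) * ⟪x j, A (x j)⟫
          = μ * ∑ j, (c j : ℂ)
            + (t : ℂ) * ((lam₁ - lam₂) / 2) * ((∑ j, |c j| : ℝ) : ℂ) := by
        calc ∑ j, (c j : ℂ) * ⟪x j, A (x j)⟫
            = ∑ j, ((c j : ℂ) * μ + (t : ℂ) * ((|c j| : ℝ) : ℂ) * ((lam₁ - lam₂) / 2)) := by
              apply Finset.sum_congr rfl
              intro j _
              rw [hvalj j, mul_add, ← mul_assoc, hcsg j]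
          _ = μ * ∑ j, (c j : ℂ)
              + (t : ℂ) * ((lam₁ - lam₂) / 2) * ((∑ j, |c j| : ℝ) : ℂ) := by
              have hcast : ((∑ j, |c j| : ℝ) : ℂ) = ∑ j, ((|c j| : ℝ) : ℂ) := by
                push_cast
                rfl
              rw [Finset.sum_add_distrib, ← Finset.sum_mul, hcast, Finset.mul_sum,
                ← Finset.sum_mul]
              congr 1
              · rw [mul_comm]
                exact Finset.mul_sum Finset.univ (fun i => ((c i : ℝ) : ℂ)) μ
              · rw [← Finset.mul_sum]
                ring
      exact hfin.symm
end

section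
/- Let p ∈ ℂ with |p| < 1, φ(z) = (p − z)/(1 − conj(p)·z), let m be normalized Haar (arclength) measure on the unit circle 𝕋, let ρ : 𝕋 → (0, ∞) be measurable and positive a.e. with ρ square-integrable, and let μ = m.withDensity(ρ²) be the weighted measure. Suppose T is a bounded linear operator on L²(𝕋, μ) such that for every f ∈ L²(𝕋, μ), T f agrees almost everywhere with f ∘ φ. Then the operator norm of T equals the essential supremum (with respect to m) over t ∈ 𝕋 of √(1 − |p|²)·ρ(φ(t)) / ( |p − t|·ρ(t) ). -/
open MeasureTheory Complex Set
open scoped Real NNReal ENNReal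

noncomputable section

namespace Complex

/-- compatibility: the complex absolute value as a bundled absolute value -/
def abs : AbsoluteValue ℂ ℝ := IsAbsoluteValue.toAbsoluteValue (norm : ℂ → ℝ)

@[simp] lemma abs_apply (z : ℂ) : Complex.abs z = ‖z‖ := rfl

lemma norm_eq_abs (z : ℂ) : ‖z‖ = Complex.abs z := rfl

lemma normSq_eq_abs (z : ℂ) : normSq z = Complex.abs z ^ 2 := Complex.normSq_eq_norm_sq z

lemma abs_conj (z : ℂ) : Complex.abs ((starRingEnd ℂ) z) = Complex.abs z := Complex.norm_conj z

lemma continuous_abs : Continuous Complex.abs := continuous_norm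

lemma abs_mul_exp_arg_mul_I (x : ℂ) : ↑(Complex.abs x) * exp (arg x * I) = x :=
  Complex.norm_mul_exp_arg_mul_I x

end Complex

namespace CompOpNormAux

/-- the exponential parametrization of the circle -/
def ee (θ : ℝ) : ℂ := Complex.exp (θ * Complex.I)

lemma abs_ee (θ : ℝ) : Complex.abs (ee θ) = 1 :=
  Complex.norm_exp_ofReal_mul_I θ

lemma ee_ne_zero (θ : ℝ) : ee θ ≠ 0 := by
  intro h
  have := abs_ee θ
  rw [h] at this
  simp at this

lemma measurable_ee : Measurable ee :=
  (Complex.continuous_exp.comp (continuous_ofReal.mul continuous_const)).measurable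

lemma continuous_ee : Continuous ee :=
  Complex.continuous_exp.comp (Complex.continuous_ofReal.mul continuous_const)

lemma conj_eq_inv {z : ℂ} (hz : Complex.abs z = 1) : (starRingEnd ℂ) z = z⁻¹ := by
  rw [Complex.inv_def, Complex.normSq_eq_abs, hz]
  simp

lemma mul_conj_one {z : ℂ} (hz : Complex.abs z = 1) : z * (starRingEnd ℂ) z = 1 := by
  rw [Complex.mul_conj, Complex.normSq_eq_abs, hz]
  simp

variable {p : ℂ}

lemma den_ne (hp : Complex.abs p < 1) {t : ℂ} (ht : Complex.abs t ≤ 1) :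
    (1 : ℂ) - (starRingEnd ℂ) p * t ≠ 0 := by
  intro h
  have h1 : (1 : ℂ) = (starRingEnd ℂ) p * t := by linear_combination h
  have : (1 : ℝ) = Complex.abs ((starRingEnd ℂ) p * t) := by
    rw [← h1]; simp
  have hle : Complex.abs ((starRingEnd ℂ) p * t) < 1 := by
    rw [map_mul, Complex.abs_conj]
    calc Complex.abs p * Complex.abs t ≤ Complex.abs p * 1 := by
          exact mul_le_mul_of_nonneg_left ht (Complex.abs.nonneg p)
      _ < 1 := by simpa using hp
  linarith

lemma abs_sub_eq (hp : Complex.abs p < 1) {t : ℂ} (ht : Complex.abs t = 1) :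
    Complex.abs (p - t) = Complex.abs (1 - (starRingEnd ℂ) p * t) := by
  have h1 : (starRingEnd ℂ) t * (p - t) = -((starRingEnd ℂ) ((1:ℂ) - (starRingEnd ℂ) p * t)) := by
    have h2 : t * (starRingEnd ℂ) t = 1 := mul_conj_one ht
    simp only [map_sub, map_mul, map_one, Complex.conj_conj]
    linear_combination -h2
  calc Complex.abs (p - t) = Complex.abs ((starRingEnd ℂ) t) * Complex.abs (p - t) := by
        rw [Complex.abs_conj, ht, one_mul]
    _ = Complex.abs ((starRingEnd ℂ) t * (p - t)) := (map_mul Complex.abs _ _).symm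
    _ = Complex.abs (1 - (starRingEnd ℂ) p * t) := by
        rw [h1, Complex.abs.map_neg, Complex.abs_conj]

/-- the Möbius involution -/
def Φ (p : ℂ) : ℂ → ℂ := fun z => (p - z) / (1 - (starRingEnd ℂ) p * z)

lemma measurable_Φ : Measurable (Φ p) :=
  Measurable.div (measurable_const.sub measurable_id)
    (measurable_const.sub (measurable_const.mul measurable_id))

lemma abs_Φ (hp : Complex.abs p < 1) {t : ℂ} (ht : Complex.abs t = 1) :
    Complex.abs (Φ p t) = 1 := by
  have hpt : Complex.abs (p - t) ≠ 0 := by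
    intro h
    rw [map_eq_zero, sub_eq_zero] at h
    rw [h, ht] at hp
    exact lt_irrefl _ hp
  rw [Φ, map_div₀, ← abs_sub_eq hp ht, div_self hpt]

lemma Φ_Φ (hp : Complex.abs p < 1) {t : ℂ} (ht : Complex.abs t = 1) :
    Φ p (Φ p t) = t := by
  have h1 : (1:ℂ) - (starRingEnd ℂ) p * t ≠ 0 := den_ne hp ht.le
  have h2 : (1:ℂ) - (starRingEnd ℂ) p * Φ p t ≠ 0 := den_ne hp (abs_Φ hp ht).le
  have h3 : (1:ℂ) - (starRingEnd ℂ) p * p ≠ 0 := by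
    simpa using den_ne hp hp.le
  simp only [Φ] at h2 ⊢
  rw [div_eq_iff h2]
  have h1' : (1:ℂ) - t * (starRingEnd ℂ) p ≠ 0 := by rwa [mul_comm] at h1
  field_simp
  ring

lemma Φ_zero : Φ p 0 = p := by simp [Φ]


section meas
variable {m : Measure ℂ}
  (hm : m = (ENNReal.ofReal (2 * Real.pi))⁻¹ •
      Measure.map (fun θ : ℝ => Complex.exp (θ * Complex.I))
        (volume.restrict (Set.Ioc (0 : ℝ) (2 * Real.pi))))

lemma two_pi_pos : (0:ℝ) < 2 * π := by positivity

include hm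

lemma m_eq : m = (ENNReal.ofReal (2 * Real.pi))⁻¹ •
    Measure.map ee (volume.restrict (Set.Ioc (0 : ℝ) (2 * Real.pi))) := hm

lemma m_prob : IsProbabilityMeasure m := by
  constructor
  rw [m_eq hm, Measure.smul_apply, Measure.map_apply measurable_ee MeasurableSet.univ]
  simp only [Set.preimage_univ, Measure.restrict_apply_univ, Real.volume_Ioc, sub_zero,
    smul_eq_mul]
  rw [ENNReal.inv_mul_cancel]
  · simp only [ne_eq, ENNReal.ofReal_eq_zero, not_le]
    exact two_pi_pos
  · exact ENNReal.ofReal_ne_top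

lemma m_ae_circle : ∀ᵐ t ∂m, Complex.abs t = 1 := by
  rw [m_eq hm]
  have hs : MeasurableSet {t : ℂ | ¬ Complex.abs t = 1} :=
    ((Complex.continuous_abs.measurable (measurableSet_singleton (1:ℝ))).compl)
  rw [ae_iff]
  simp only [Measure.smul_apply]
  rw [Measure.map_apply measurable_ee hs]
  have : ee ⁻¹' {t : ℂ | ¬ Complex.abs t = 1} = ∅ := by
    ext θ; simpa using abs_ee θ
  rw [this]
  simp

lemma lintegral_m {g : ℂ → ENNReal} (hg : AEMeasurable g m) :
    ∫⁻ t, g t ∂m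
      = (ENNReal.ofReal (2 * Real.pi))⁻¹ * ∫⁻ θ in Set.Ioc (0:ℝ) (2*π), g (ee θ) := by
  have hg' : AEMeasurable g (Measure.map ee (volume.restrict (Set.Ioc (0:ℝ) (2*π)))) := by
    have := hg
    rw [m_eq hm] at this
    rwa [aemeasurable_smul_measure_iff] at this
    simp [two_pi_pos.ne', ENNReal.inv_eq_zero, ENNReal.mul_eq_top]
  rw [m_eq hm, lintegral_smul_measure, lintegral_map' hg' measurable_ee.aemeasurable, smul_eq_mul]

lemma integral_m {g : ℂ → ℂ} (hg : AEStronglyMeasurable g m) :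
    ∫ t, g t ∂m = (2*π)⁻¹ • ∫ θ in Set.Ioc (0:ℝ) (2*π), g (ee θ) := by
  have hg' : AEStronglyMeasurable g
      (Measure.map ee (volume.restrict (Set.Ioc (0:ℝ) (2*π)))) := by
    have h2 := hg
    rw [m_eq hm] at h2
    obtain ⟨g', hg1, hg2⟩ := h2
    refine ⟨g', hg1, ?_⟩
    rwa [Filter.EventuallyEq, Measure.ae_ennreal_smul_measure_eq (by
      simp [two_pi_pos.ne', ENNReal.inv_eq_zero, ENNReal.mul_eq_top] : (ENNReal.ofReal (2 * Real.pi))⁻¹ ≠ 0)] at hg2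
  rw [m_eq hm, integral_smul_measure,
    integral_map measurable_ee.aemeasurable hg']
  congr 1
  rw [ENNReal.toReal_inv, ENNReal.toReal_ofReal two_pi_pos.le]

end meas

/-! ### Cauchy type integrals -/

lemma cauchy_formula {f : ℂ → ℂ} (hf : DiffContOnCl ℂ f (Metric.ball 0 1))
    {w : ℂ} (hw : Complex.abs w < 1) :
    ∫ θ in Set.Ioc (0:ℝ) (2*π), (ee θ * f (ee θ)) / (ee θ - w) = (2*π : ℝ) • f w := by
  have hw' : w ∈ Metric.ball (0:ℂ) 1 := by
    simpa [Metric.mem_ball, Complex.dist_eq] using hw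
  have h := hf.circleIntegral_sub_inv_smul hw'
  rw [circleIntegral] at h
  simp only [deriv_circleMap, circleMap, Complex.ofReal_one, one_mul, zero_add] at h
  rw [intervalIntegral.integral_of_le two_pi_pos.le] at h
  have hcongr : ∀ θ : ℝ,
      (Complex.exp (θ * Complex.I) * Complex.I) • ((Complex.exp (θ * Complex.I) - w)⁻¹
        • f (Complex.exp (θ * Complex.I)))
      = Complex.I * ((ee θ * f (ee θ)) / (ee θ - w)) := by
    intro θ
    simp only [smul_eq_mul, ee]
    ring
  rw [setIntegral_congr_fun measurableSet_Ioc (fun θ _ => hcongr θ)] at h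
  rw [integral_const_mul] at h
  have hI : (Complex.I : ℂ) ≠ 0 := Complex.I_ne_zero
  have h2 : (2 * (π:ℂ) * Complex.I) • f w = Complex.I * ((2*π:ℝ) • f w) := by
    simp only [smul_eq_mul, Complex.real_smul]
    push_cast
    ring
  rw [h2] at h
  exact mul_left_cancel₀ hI h

lemma meanvalue {f : ℂ → ℂ} (hf : DiffContOnCl ℂ f (Metric.ball 0 1)) :
    ∫ θ in Set.Ioc (0:ℝ) (2*π), f (ee θ) = (2*π : ℝ) • f 0 := by
  have h := cauchy_formula hf (w := 0) (by simp)
  rw [← h]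
  refine setIntegral_congr_fun measurableSet_Ioc (fun θ _ => ?_)
  rw [sub_zero, mul_comm, mul_div_assoc, div_self (ee_ne_zero θ), mul_one]

lemma diffContOnCl_of_open {f : ℂ → ℂ} {U : Set ℂ} (hU : IsOpen U)
    (hsub : Metric.closedBall (0:ℂ) 1 ⊆ U) (hf : DifferentiableOn ℂ f U) :
    DiffContOnCl ℂ f (Metric.ball 0 1) := by
  constructor
  · exact hf.mono ((Metric.ball_subset_closedBall).trans hsub)
  · rw [closure_ball (0:ℂ) one_ne_zero]
    exact hf.continuousOn.mono hsub


variable {p : ℂ}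

lemma isOpen_den : IsOpen {z : ℂ | (1:ℂ) - (starRingEnd ℂ) p * z ≠ 0} :=
  isOpen_ne_fun (by continuity) continuous_const


/-- the Poisson kernel density -/
def Kre (p : ℂ) : ℂ → ℝ := fun t => (1 - (Complex.abs p)^2) / (Complex.abs (p - t))^2

lemma Kre_nonneg (hp : Complex.abs p < 1) (t : ℂ) : 0 ≤ Kre p t := by
  apply div_nonneg
  · nlinarith [Complex.abs.nonneg p]
  · positivity


lemma sub_ne_circle (hp : Complex.abs p < 1) {z : ℂ} (hz : Complex.abs z = 1) :
    z - p ≠ 0 := by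
  intro h
  rw [sub_eq_zero] at h
  rw [← h, hz] at hp
  exact lt_irrefl _ hp

lemma continuous_Kre_ee (hp : Complex.abs p < 1) : Continuous (fun θ : ℝ => Kre p (ee θ)) := by
  unfold Kre
  refine Continuous.div continuous_const
    (((Complex.continuous_abs.comp (continuous_const.sub continuous_ee))).pow 2) (fun θ => ?_)
  have h : p - ee θ ≠ 0 := by
    intro h
    have h2 : ee θ - p ≠ 0 := sub_ne_circle hp (abs_ee θ)
    exact h2 (by linear_combination -h)
  exact pow_ne_zero 2 (Complex.abs.ne_zero h)

lemma kernel_eq (hp : Complex.abs p < 1) {z : ℂ} (hz : Complex.abs z = 1) :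
    ((Kre p z : ℝ) : ℂ)
      = 1/(1 - (starRingEnd ℂ) p * z) + z/(z - p) - 1 := by
  have hz0 : z ≠ 0 := fun h => by simp [h] at hz
  have hzp : z - p ≠ 0 := sub_ne_circle hp hz
  have hd : (1:ℂ) - (starRingEnd ℂ) p * z ≠ 0 := den_ne hp hz.le
  have hpz : p - z ≠ 0 := fun h => hzp (by linear_combination -h)
  have habs2 : ((Complex.abs (p - z) : ℝ) : ℂ)^2
      = (p - z) * ((starRingEnd ℂ) p - (starRingEnd ℂ) z) := by
    rw [← Complex.ofReal_pow, ← Complex.normSq_eq_abs, ← Complex.mul_conj]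
    simp
  have habsp : ((Complex.abs p : ℝ) : ℂ)^2 = p * (starRingEnd ℂ) p := by
    rw [← Complex.ofReal_pow, ← Complex.normSq_eq_abs, ← Complex.mul_conj]
  have habs2' : ((Complex.abs (p - z) : ℝ) : ℂ)^2 ≠ 0 := by
    rw [habs2]
    refine mul_ne_zero hpz (fun h => hpz ?_)
    have h2 := congrArg (starRingEnd ℂ) h
    rw [map_sub, map_zero, Complex.conj_conj, Complex.conj_conj] at h2
    exact h2
  have hcz : (starRingEnd ℂ) z = z⁻¹ := conj_eq_inv hz
  rw [Kre]
  push_cast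
  rw [div_eq_iff habs2', habs2, hcz, habsp]
  field_simp
  ring

lemma hUsub (hp : Complex.abs p < 1) :
    Metric.closedBall (0:ℂ) 1 ⊆ {z : ℂ | (1:ℂ) - (starRingEnd ℂ) p * z ≠ 0} := by
  intro z hz
  rw [Metric.mem_closedBall, Complex.dist_eq, sub_zero] at hz
  exact den_ne hp hz

lemma dcc_pow_div (hp : Complex.abs p < 1) (n : ℕ) :
    DiffContOnCl ℂ (fun z : ℂ => z^n / (1 - (starRingEnd ℂ) p * z)) (Metric.ball 0 1) := by
  refine diffContOnCl_of_open isOpen_den (hUsub hp) ?_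
  refine DifferentiableOn.div ((differentiable_pow n).differentiableOn) ?_ (fun z hz => hz)
  exact ((differentiable_const (1:ℂ)).sub ((differentiable_const _).mul differentiable_id)).differentiableOn

lemma dcc_pow (n : ℕ) : DiffContOnCl ℂ (fun z : ℂ => z^n) (Metric.ball 0 1) :=
  (differentiable_pow n).diffContOnCl

lemma dcc_phi_pow (hp : Complex.abs p < 1) (n : ℕ) :
    DiffContOnCl ℂ (fun z : ℂ => (Φ p z)^n) (Metric.ball 0 1) := by
  refine diffContOnCl_of_open isOpen_den (hUsub hp) ?_
  refine DifferentiableOn.pow ?_ n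
  refine DifferentiableOn.div ?_ ?_ (fun z hz => hz)
  · exact ((differentiable_const p).sub differentiable_id).differentiableOn
  · exact ((differentiable_const (1:ℂ)).sub
      ((differentiable_const _).mul differentiable_id)).differentiableOn

lemma mvphi (hp : Complex.abs p < 1) (n : ℕ) :
    ∫ θ in Set.Ioc (0:ℝ) (2*π), (Φ p (ee θ))^n = (2*π : ℝ) • (p^n : ℂ) := by
  have h := meanvalue (dcc_phi_pow hp n)
  rwa [Φ_zero] at h

lemma poisson (hp : Complex.abs p < 1) (n : ℕ) :
    ∫ θ in Set.Ioc (0:ℝ) (2*π), ((Kre p (ee θ) : ℝ) : ℂ) * (ee θ)^n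
      = (2*π : ℝ) • (p^n : ℂ) := by
  have hcongr : ∀ θ ∈ Set.Ioc (0:ℝ) (2*π),
      ((Kre p (ee θ) : ℝ) : ℂ) * (ee θ)^n
        = (ee θ)^n / (1 - (starRingEnd ℂ) p * ee θ)
          + (ee θ * (ee θ)^n) / (ee θ - p) - (ee θ)^n := by
    intro θ _
    rw [kernel_eq hp (abs_ee θ)]
    have hzp := sub_ne_circle hp (abs_ee θ)
    have hd := den_ne hp (abs_ee θ).le
    field_simp
  rw [setIntegral_congr_fun measurableSet_Ioc hcongr]
  have i1 : IntegrableOn (fun θ => (ee θ)^n / (1 - (starRingEnd ℂ) p * ee θ))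
      (Set.Ioc (0:ℝ) (2*π)) volume :=
    (Continuous.div (continuous_ee.pow n)
      (continuous_const.sub (continuous_const.mul continuous_ee))
      (fun θ => den_ne hp (abs_ee θ).le)).integrableOn_Ioc
  have i2 : IntegrableOn (fun θ => (ee θ * (ee θ)^n) / (ee θ - p))
      (Set.Ioc (0:ℝ) (2*π)) volume :=
    (Continuous.div (continuous_ee.mul (continuous_ee.pow n))
      (continuous_ee.sub continuous_const)
      (fun θ => sub_ne_circle hp (abs_ee θ))).integrableOn_Ioc
  have i3 : IntegrableOn (fun θ => (ee θ)^n) (Set.Ioc (0:ℝ) (2*π)) volume :=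
    (continuous_ee.pow n).integrableOn_Ioc
  have h := integral_sub (i1.add i2) i3
  simp only [Pi.add_apply] at h
  rw [h, integral_add i1 i2]
  rw [meanvalue (dcc_pow_div hp n), cauchy_formula (dcc_pow n) hp, meanvalue (dcc_pow n)]
  simp only [mul_zero, sub_zero, div_one]
  exact add_sub_cancel_left _ _


lemma abs_p_sub_pos (hp : Complex.abs p < 1) {t : ℂ} (ht : Complex.abs t = 1) :
    0 < Complex.abs (p - t) := by
  have h := sub_ne_circle hp ht
  have h2 : p - t ≠ 0 := fun h0 => h (by linear_combination -h0)
  exact Complex.abs.pos h2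

lemma measurable_Kre {p : ℂ} : Measurable (Kre p) := by
  unfold Kre
  exact measurable_const.div
    (((Complex.continuous_abs.measurable).comp (measurable_const.sub measurable_id)).pow_const 2)

theorem map_phi_eq {p : ℂ} (hp : Complex.abs p < 1) {m : Measure ℂ}
    (hm : m = (ENNReal.ofReal (2 * Real.pi))⁻¹ •
      Measure.map (fun θ : ℝ => Complex.exp (θ * Complex.I))
        (volume.restrict (Set.Ioc (0 : ℝ) (2 * Real.pi)))) :
    Measure.map (Φ p) m = m.withDensity (fun t => ENNReal.ofReal (Kre p t)) := by
  haveI hfact : Fact (0 < 2*π) := ⟨two_pi_pos⟩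
  haveI := m_prob hm
  set ν₁ : Measure ℂ := Measure.map (Φ p) m with hν₁
  set ν₂ : Measure ℂ := m.withDensity (fun t => ENNReal.ofReal (Kre p t)) with hν₂
  haveI : IsProbabilityMeasure ν₁ := Measure.isProbabilityMeasure_map measurable_Φ.aemeasurable
  haveI : IsFiniteMeasure ν₂ := by
    constructor
    rw [hν₂, withDensity_apply _ MeasurableSet.univ, Measure.restrict_univ]
    have hbd : ∀ᵐ t ∂m, ENNReal.ofReal (Kre p t)
        ≤ ENNReal.ofReal ((1 - (Complex.abs p)^2) / (1 - Complex.abs p)^2) := by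
      filter_upwards [m_ae_circle hm] with t ht
      apply ENNReal.ofReal_le_ofReal
      have h1 : 1 - Complex.abs p ≤ Complex.abs (p - t) := by
        have h0 := norm_sub_norm_le t p
        simp only [Complex.norm_eq_abs] at h0
        rw [ht, Complex.abs.map_sub t p] at h0
        exact h0
      have h2 : (0:ℝ) < 1 - Complex.abs p := by linarith
      unfold Kre
      apply div_le_div_of_nonneg_left ?_ (by positivity) ?_
      · nlinarith [Complex.abs.nonneg p]
      · nlinarith
    calc ∫⁻ t, ENNReal.ofReal (Kre p t) ∂m
        ≤ ∫⁻ _, ENNReal.ofReal ((1 - (Complex.abs p)^2) / (1 - Complex.abs p)^2) ∂m :=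
          lintegral_mono_ae hbd
      _ < ⊤ := by
          rw [lintegral_const]
          exact ENNReal.mul_lt_top ENNReal.ofReal_lt_top (measure_lt_top m _)
  have hcircle_meas : MeasurableSet {t : ℂ | Complex.abs t = 1} :=
    Complex.continuous_abs.measurable (measurableSet_singleton (1:ℝ))
  have hae1 : ∀ᵐ t ∂ν₁, Complex.abs t = 1 := by
    rw [hν₁, ae_map_iff measurable_Φ.aemeasurable hcircle_meas]
    filter_upwards [m_ae_circle hm] with t ht
    exact abs_Φ hp ht
  have hae2 : ∀ᵐ t ∂ν₂, Complex.abs t = 1 :=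
    (withDensity_absolutelyContinuous m _).ae_le (m_ae_circle hm)
  -- push to the additive circle
  set q : ℂ → AddCircle (2*π) := fun t => ((Complex.arg t : ℝ) : AddCircle (2*π)) with hq
  have hqmeas : Measurable q := AddCircle.measurable_mk'.comp Complex.measurable_arg
  have hfq : ∀ (n : ℤ) (t : ℂ), Complex.abs t = 1 → (fourier n (q t) : ℂ) = t ^ n := by
    intro n t ht
    rw [hq]
    rw [fourier_coe_apply]
    have hπ : ((2*π : ℝ) : ℂ) ≠ 0 := by
      simp only [ne_eq, Complex.ofReal_eq_zero]
      exact two_pi_pos.ne'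
    have harg : 2 * (π:ℂ) * Complex.I * (n:ℂ) * (Complex.arg t : ℂ) / ((2*π : ℝ) : ℂ)
        = (n:ℂ) * ((Complex.arg t : ℂ) * Complex.I) := by
      rw [div_eq_iff hπ]
      push_cast
      ring
    rw [harg, Complex.exp_int_mul]
    congr 1
    have := Complex.abs_mul_exp_arg_mul_I t
    rwa [ht, Complex.ofReal_one, one_mul] at this
  -- equality of moments
  have hpow : ∀ k : ℕ, (∫ t, t ^ k ∂ν₁) = ∫ t, t ^ k ∂ν₂ := by
    intro k
    have h1 : (∫ t, t ^ k ∂ν₁) = p ^ k := by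
      rw [hν₁, integral_map (f := fun t : ℂ => t ^ k) measurable_Φ.aemeasurable
        ((by fun_prop : Measurable fun z : ℂ => z ^ k).aestronglyMeasurable)]
      rw [integral_m hm ((measurable_Φ.pow_const k).aestronglyMeasurable)]
      rw [mvphi hp k, smul_smul, inv_mul_cancel₀ two_pi_pos.ne', one_smul]
    have h2 : (∫ t, t ^ k ∂ν₂) = p ^ k := by
      have hde : (fun t : ℂ => ENNReal.ofReal (Kre p t))
          = fun t : ℂ => ((Real.toNNReal (Kre p t) : ℝ≥0) : ℝ≥0∞) := rfl
      rw [hν₂, hde, integral_withDensity_eq_integral_smul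
        (measurable_Kre.real_toNNReal) (fun t => t ^ k)]
      have hcongr : (fun t : ℂ => Real.toNNReal (Kre p t) • t ^ k)
          = fun t : ℂ => ((Kre p t : ℝ) : ℂ) * t ^ k := by
        funext t
        rw [NNReal.smul_def, Real.coe_toNNReal _ (Kre_nonneg hp t), Complex.real_smul]
      rw [hcongr]
      have hmg : Measurable fun t : ℂ => ((Kre p t : ℝ) : ℂ) * t ^ k :=
        (Complex.measurable_ofReal.comp measurable_Kre).mul (measurable_id.pow_const k)
      rw [integral_m hm hmg.aestronglyMeasurable]
      rw [poisson hp k, smul_smul, inv_mul_cancel₀ two_pi_pos.ne', one_smul]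
    rw [h1, h2]
  have hint : ∀ n : ℤ, (∫ t, t ^ n ∂ν₁) = ∫ t, t ^ n ∂ν₂ := by
    intro n
    rcases n with k | k
    · simpa only [Int.ofNat_eq_coe, zpow_natCast] using hpow k
    · have hconj : ∀ (ν : Measure ℂ), (∀ᵐ t ∂ν, Complex.abs t = 1) →
          (∫ t, t ^ (Int.negSucc k) ∂ν) = (starRingEnd ℂ) (∫ t, t ^ (k+1) ∂ν) := by
        intro ν hν
        rw [← integral_conj]
        apply integral_congr_ae
        filter_upwards [hν] with t ht
        rw [zpow_negSucc]
        rw [conj_eq_inv (by rw [map_pow, ht, one_pow])]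
      rw [hconj ν₁ hae1, hconj ν₂ hae2, hpow (k+1)]
  -- equality of fourier integrals on the additive circle
  set σ₁ : Measure (AddCircle (2*π)) := Measure.map q ν₁ with hσ₁
  set σ₂ : Measure (AddCircle (2*π)) := Measure.map q ν₂ with hσ₂
  haveI : IsFiniteMeasure σ₁ := Measure.isFiniteMeasure_map _ _
  haveI : IsFiniteMeasure σ₂ := Measure.isFiniteMeasure_map _ _
  have hfourier : ∀ n : ℤ,
      (∫ x, fourier n x ∂σ₁) = ∫ x, fourier n x ∂σ₂ := by
    intro n
    rw [hσ₁, hσ₂, integral_map hqmeas.aemeasurable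
        ((fourier n).continuous.aestronglyMeasurable),
      integral_map hqmeas.aemeasurable ((fourier n).continuous.aestronglyMeasurable)]
    have e1 : (∫ t, fourier n (q t) ∂ν₁) = ∫ t, t ^ n ∂ν₁ :=
      integral_congr_ae (by filter_upwards [hae1] with t ht; exact hfq n t ht)
    have e2 : (∫ t, fourier n (q t) ∂ν₂) = ∫ t, t ^ n ∂ν₂ :=
      integral_congr_ae (by filter_upwards [hae2] with t ht; exact hfq n t ht)
    rw [e1, e2, hint n]
  -- all continuous functions
  have integrable_cont : ∀ (σ : Measure (AddCircle (2*π))) [IsFiniteMeasure σ]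
      (g : C(AddCircle (2*π), ℂ)), Integrable (⇑g) σ := by
    intro σ _ g
    rw [← integrableOn_univ]
    exact g.continuous.continuousOn.integrableOn_compact isCompact_univ
  have hcont : ∀ g : C(AddCircle (2*π), ℂ), (∫ x, g x ∂σ₁) = ∫ x, g x ∂σ₂ := by
    set L : C(AddCircle (2*π), ℂ) →ₗ[ℂ] ℂ :=
      { toFun := fun g => (∫ x, g x ∂σ₁) - ∫ x, g x ∂σ₂
        map_add' := by
          intro g h
          simp only [ContinuousMap.add_apply]
          rw [integral_add (integrable_cont σ₁ g) (integrable_cont σ₁ h),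
            integral_add (integrable_cont σ₂ g) (integrable_cont σ₂ h)]
          ring
        map_smul' := by
          intro c g
          simp only [ContinuousMap.smul_apply, smul_eq_mul, RingHom.id_apply]
          rw [integral_const_mul, integral_const_mul]
          ring } with hL
    have hLb : ∀ g : C(AddCircle (2*π), ℂ),
        ‖L g‖ ≤ ((σ₁ Set.univ).toReal + (σ₂ Set.univ).toReal) * ‖g‖ := by
      intro g
      have b1 : ‖∫ x, g x ∂σ₁‖ ≤ ‖g‖ * (σ₁ Set.univ).toReal :=
        norm_integral_le_of_norm_le_const
          (Filter.Eventually.of_forall fun x => g.norm_coe_le_norm x)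
      have b2 : ‖∫ x, g x ∂σ₂‖ ≤ ‖g‖ * (σ₂ Set.univ).toReal :=
        norm_integral_le_of_norm_le_const
          (Filter.Eventually.of_forall fun x => g.norm_coe_le_norm x)
      calc ‖L g‖ ≤ ‖∫ x, g x ∂σ₁‖ + ‖∫ x, g x ∂σ₂‖ := norm_sub_le _ _
        _ ≤ ‖g‖ * (σ₁ Set.univ).toReal + ‖g‖ * (σ₂ Set.univ).toReal := add_le_add b1 b2
        _ = ((σ₁ Set.univ).toReal + (σ₂ Set.univ).toReal) * ‖g‖ := by ring
    set Lc : C(AddCircle (2*π), ℂ) →L[ℂ] ℂ :=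
      LinearMap.mkContinuous L _ hLb with hLc
    have hker : Submodule.span ℂ (Set.range (@fourier (2*π))) ≤ LinearMap.ker (Lc : C(AddCircle (2*π), ℂ) →ₗ[ℂ] ℂ) := by
      rw [Submodule.span_le]
      rintro _ ⟨n, rfl⟩
      rw [SetLike.mem_coe, LinearMap.mem_ker]
      show (∫ x, fourier n x ∂σ₁) - ∫ x, fourier n x ∂σ₂ = 0
      rw [hfourier n, sub_self]
    have hclosed : IsClosed ((LinearMap.ker (Lc : C(AddCircle (2*π), ℂ) →ₗ[ℂ] ℂ) : Submodule ℂ C(AddCircle (2*π), ℂ)) :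
        Set C(AddCircle (2*π), ℂ)) := ContinuousLinearMap.isClosed_ker Lc
    have htop : (⊤ : Submodule ℂ C(AddCircle (2*π), ℂ)) ≤ LinearMap.ker (Lc : C(AddCircle (2*π), ℂ) →ₗ[ℂ] ℂ) := by
      rw [← span_fourier_closure_eq_top]
      exact Submodule.topologicalClosure_minimal _ hker hclosed
    intro g
    have h0 : Lc g = 0 := LinearMap.mem_ker.mp (htop trivial)
    have hthis : (∫ x, g x ∂σ₁) - ∫ x, g x ∂σ₂ = 0 := h0
    exact sub_eq_zero.mp hthis
  -- conclude equality of pushed measures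
  have hσeq : σ₁ = σ₂ := by
    apply ext_of_forall_lintegral_eq_of_IsFiniteMeasure
    intro f
    have hcf : Continuous fun x => (f x : ℝ) := NNReal.continuous_coe.comp f.continuous
    have hint1 : Integrable (fun x => (f x : ℝ)) σ₁ := by
      rw [← integrableOn_univ]
      exact hcf.continuousOn.integrableOn_compact isCompact_univ
    have hint2 : Integrable (fun x => (f x : ℝ)) σ₂ := by
      rw [← integrableOn_univ]
      exact hcf.continuousOn.integrableOn_compact isCompact_univ
    rw [lintegral_coe_eq_integral _ hint1, lintegral_coe_eq_integral _ hint2]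
    congr 1
    have hgc := hcont ⟨fun x => ((f x : ℝ) : ℂ), Complex.continuous_ofReal.comp hcf⟩
    simp only [ContinuousMap.coe_mk] at hgc
    have h1 : ∫ x, ((f x : ℝ) : ℂ) ∂σ₁ = ((∫ x, (f x : ℝ) ∂σ₁ : ℝ) : ℂ) := integral_ofReal
    have h2 : ∫ x, ((f x : ℝ) : ℂ) ∂σ₂ = ((∫ x, (f x : ℝ) ∂σ₂ : ℝ) : ℂ) := integral_ofReal
    rw [h1, h2] at hgc
    exact_mod_cast hgc
  -- pull back along the circle parametrization
  set E : AddCircle (2*π) → ℂ := fun x => fourier 1 x with hE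
  have hEmeas : Measurable E := (fourier 1).continuous.measurable
  have hback : ∀ (ν : Measure ℂ), (∀ᵐ t ∂ν, Complex.abs t = 1) →
      Measure.map E (Measure.map q ν) = ν := by
    intro ν hν
    rw [Measure.map_map hEmeas hqmeas]
    have : (E ∘ q) =ᵐ[ν] id := by
      filter_upwards [hν] with t ht
      have := hfq 1 t ht
      simpa [Function.comp, hE, zpow_one] using this
    rw [Measure.map_congr this, Measure.map_id]
  calc ν₁ = Measure.map E σ₁ := (hback ν₁ hae1).symm
    _ = Measure.map E σ₂ := by rw [hσeq]
    _ = ν₂ := hback ν₂ hae2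


lemma pow_two_le_rev {a b : ℝ≥0∞} (h : a^2 ≤ b^2) : a ≤ b := by
  by_contra hc
  push_neg at hc
  exact absurd h (not_le.mpr (ENNReal.pow_lt_pow_left two_ne_zero hc))

lemma eLpNorm_two_sq {α : Type*} [MeasurableSpace α] (μ : Measure α) (g : α → ℂ) :
    (eLpNorm g 2 μ)^2 = ∫⁻ x, (‖g x‖₊ : ℝ≥0∞)^2 ∂μ := by
  rw [eLpNorm_eq_lintegral_rpow_enorm_toReal two_ne_zero ENNReal.ofNat_ne_top]
  have h2 : ((2:ℝ≥0∞)).toReal = (2:ℝ) := by simp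
  rw [h2]
  simp_rw [enorm_eq_nnnorm]
  have hpt : ∀ x, (‖g x‖₊ : ℝ≥0∞)^(2:ℝ) = (‖g x‖₊ : ℝ≥0∞)^(2:ℕ) := fun x => by
    rw [← ENNReal.rpow_natCast]; norm_num
  simp_rw [hpt]
  rw [← ENNReal.rpow_natCast (((∫⁻ x, (‖g x‖₊ : ℝ≥0∞)^(2:ℕ) ∂μ)) ^ (1/(2:ℝ))) 2,
    ← ENNReal.rpow_mul]
  norm_num



end CompOpNormAux

end

open CompOpNormAux in
/-- Norm of the composition operator `C_φ`, `φ(z) = (p - z)/(1 - p̄ z)` with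
`|p| < 1`, on the weighted space `L²(𝕋, ρ² dm)` (`m` = normalized Haar measure
on the unit circle): `‖C_φ‖` equals the `m`-essential supremum of
`√(1-|p|²) ρ(φ(t)) / (|p - t| ρ(t))`. -/
theorem norm_compositionOperator_weighted_L2_circle
    (p : ℂ) (hp : ‖p‖ < 1)
    (φ : ℂ → ℂ) (hφ : φ = fun z => (p - z) / (1 - (starRingEnd ℂ) p * z))
    (m : Measure ℂ)
    (hm : m = (ENNReal.ofReal (2 * Real.pi))⁻¹ •
      Measure.map (fun θ : ℝ => Complex.exp (θ * Complex.I))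
        (volume.restrict (Set.Ioc (0 : ℝ) (2 * Real.pi))))
    (ρ : ℂ → ℝ) (hρmeas : Measurable ρ) (hρpos : ∀ᵐ t ∂m, 0 < ρ t)
    (hρL2 : Integrable (fun t => ρ t ^ 2) m)
    (μ : Measure ℂ) (hμ : μ = m.withDensity fun t => ENNReal.ofReal (ρ t ^ 2))
    (T : Lp ℂ 2 μ →L[ℂ] Lp ℂ 2 μ)
    (hT : ∀ f : Lp ℂ 2 μ, (T f : ℂ → ℂ) =ᵐ[μ] fun z => f (φ z)) :
    ENNReal.ofReal ‖T‖ =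
      essSup (fun t => ENNReal.ofReal
        (Real.sqrt (1 - ‖p‖ ^ 2) * ρ (φ t) /
          (‖p - t‖ * ρ t))) m := by
  have hφ' : φ = Φ p := hφ
  subst hφ'
  haveI hmp : IsProbabilityMeasure m := m_prob hm
  have hcirc : ∀ᵐ t ∂m, Complex.abs t = 1 := m_ae_circle hm
  set u : ℂ → ℝ := fun t => Real.sqrt (1 - Complex.abs p ^ 2) * ρ (Φ p t) /
          (Complex.abs (p - t) * ρ t) with hu
  set W : ℂ → ℝ≥0∞ := fun t => (ENNReal.ofReal (u t))^2 with hW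
  set E : ℝ≥0∞ := essSup (fun t => ENNReal.ofReal (u t)) m with hE
  have hu_meas : Measurable u := by
    apply Measurable.div
    · exact measurable_const.mul (hρmeas.comp measurable_Φ)
    · exact (Complex.continuous_abs.measurable.comp (measurable_const.sub measurable_id)).mul
        hρmeas
  have hW_meas : Measurable W := (ENNReal.measurable_ofReal.comp hu_meas).pow_const 2
  have hD_meas : Measurable (fun t : ℂ => ENNReal.ofReal (ρ t ^ 2)) :=
    ENNReal.measurable_ofReal.comp (hρmeas.pow_const 2)
  have hKD_meas : Measurable (fun t : ℂ => ENNReal.ofReal (Kre p t)) :=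
    ENNReal.measurable_ofReal.comp measurable_Kre
  haveI hμfin : IsFiniteMeasure μ := by
    constructor
    rw [hμ, withDensity_apply _ MeasurableSet.univ, Measure.restrict_univ]
    calc ∫⁻ t, ENNReal.ofReal (ρ t ^ 2) ∂m ≤ ∫⁻ t, (‖ρ t ^ 2‖₊ : ℝ≥0∞) ∂m :=
        lintegral_mono (fun t => Real.ofReal_le_enorm _)
      _ < ⊤ := hρL2.2
  have hac1 : μ ≪ m := by rw [hμ]; exact withDensity_absolutelyContinuous m _
  have hac2 : m ≪ μ := by
    rw [hμ]
    refine withDensity_absolutelyContinuous' hD_meas.aemeasurable ?_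
    filter_upwards [hρpos] with t ht
    simp only [ne_eq, ENNReal.ofReal_eq_zero, not_le]
    positivity
  have hmap := map_phi_eq hp hm
  have hmapac : Measure.map (Φ p) m ≪ μ := by
    rw [hmap]
    exact (withDensity_absolutelyContinuous m _).trans hac2
  -- ρ ∘ Φ is positive a.e.
  have hρφpos : ∀ᵐ t ∂m, 0 < ρ (Φ p t) := by
    have hsmeas : MeasurableSet {s : ℂ | 0 < ρ s} := hρmeas measurableSet_Ioi
    rw [← ae_map_iff measurable_Φ.aemeasurable hsmeas]
    have hnull : m {s : ℂ | ¬ 0 < ρ s} = 0 := by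
      rw [← ae_iff]; exact hρpos
    rw [ae_iff]
    rw [hmap]
    exact (withDensity_absolutelyContinuous m _) hnull
  -- the key identity
  have hKI : ∀ f : Lp ℂ 2 μ,
      (∫⁻ t, (‖(f : ℂ → ℂ) (Φ p t)‖₊ : ℝ≥0∞)^2 ∂μ)
        = ∫⁻ t, (‖(f : ℂ → ℂ) t‖₊ : ℝ≥0∞)^2 * W t ∂μ := by
    intro f
    set F : ℂ → ℂ := (f : ℂ → ℂ) with hFdef
    have hF : AEStronglyMeasurable F μ := (Lp.aestronglyMeasurable f)
    have hFφ : AEStronglyMeasurable (fun z => F (Φ p z)) μ :=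
      (aestronglyMeasurable_congr (hT f)).mp (Lp.aestronglyMeasurable (T f))
    have hXφ : AEMeasurable (fun t => (‖F (Φ p t)‖₊ : ℝ≥0∞)^2) μ :=
      hFφ.enorm.pow_const 2
    set G : ℂ → ℝ≥0∞ := fun t =>
      (‖F t‖₊ : ℝ≥0∞)^2 * ENNReal.ofReal (ρ (Φ p t) ^ 2) with hG
    have hGmeas : AEMeasurable G μ :=
      (hF.enorm.pow_const 2).mul
        ((ENNReal.measurable_ofReal.comp ((hρmeas.comp measurable_Φ).pow_const 2)).aemeasurable)
    have hGmap : AEMeasurable G (Measure.map (Φ p) m) := hGmeas.mono_ac hmapac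
    have step1 : (∫⁻ t, (‖F (Φ p t)‖₊ : ℝ≥0∞)^2 ∂μ)
        = ∫⁻ t, ENNReal.ofReal (ρ t ^ 2) * (‖F (Φ p t)‖₊ : ℝ≥0∞)^2 ∂m := by
      rw [hμ, lintegral_withDensity_eq_lintegral_mul₀' (μ := m) hD_meas.aemeasurable
        (by rw [← hμ]; exact hXφ)]
      simp only [Pi.mul_apply]
    have step2 : (∫⁻ t, ENNReal.ofReal (ρ t ^ 2) * (‖F (Φ p t)‖₊ : ℝ≥0∞)^2 ∂m)
        = ∫⁻ t, G (Φ p t) ∂m := by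
      apply lintegral_congr_ae
      filter_upwards [hcirc] with t ht
      simp only [hG]
      rw [Φ_Φ hp ht, mul_comm]
    have step3 : (∫⁻ t, G (Φ p t) ∂m) = ∫⁻ t, G t ∂(Measure.map (Φ p) m) :=
      (lintegral_map' hGmap measurable_Φ.aemeasurable).symm
    have hGwd : AEMeasurable G (m.withDensity fun t => ENNReal.ofReal (Kre p t)) := by
      rw [← hmap]; exact hGmap
    have step4 : (∫⁻ t, G t ∂(Measure.map (Φ p) m))
        = ∫⁻ t, ENNReal.ofReal (Kre p t) * G t ∂m := by
      rw [hmap, lintegral_withDensity_eq_lintegral_mul₀' (μ := m) hKD_meas.aemeasurable hGwd]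
      simp only [Pi.mul_apply]
    have step5 : (∫⁻ t, ENNReal.ofReal (Kre p t) * G t ∂m)
        = ∫⁻ t, ((‖F t‖₊ : ℝ≥0∞)^2 * W t) * ENNReal.ofReal (ρ t ^ 2) ∂m := by
      apply lintegral_congr_ae
      filter_upwards [hcirc, hρpos, hρφpos] with t ht hρt hρφt
      simp only [hG, hW]
      have hunn : 0 ≤ u t := by
        rw [hu]
        simp only
        apply div_nonneg
        · exact mul_nonneg (Real.sqrt_nonneg _) hρφt.le
        · exact mul_nonneg (Complex.abs.nonneg _) hρt.le
      have hreal : Kre p t * (ρ (Φ p t) ^ 2) = (u t)^2 * ρ t ^ 2 := by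
        rw [hu]
        simp only
        rw [div_pow, mul_pow, mul_pow, Real.sq_sqrt (by nlinarith [Complex.abs.nonneg p, (by simpa using hp : Complex.abs p < 1)] :
          (0:ℝ) ≤ 1 - Complex.abs p ^ 2)]
        rw [Kre]
        have h1 : Complex.abs (p - t) ≠ 0 := (abs_p_sub_pos hp ht).ne'
        have h2 : ρ t ≠ 0 := hρt.ne'
        field_simp
      calc ENNReal.ofReal (Kre p t) *
            ((‖F t‖₊ : ℝ≥0∞)^2 * ENNReal.ofReal (ρ (Φ p t) ^ 2))
          = (‖F t‖₊ : ℝ≥0∞)^2 * ENNReal.ofReal (Kre p t * ρ (Φ p t) ^ 2) := by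
            rw [ENNReal.ofReal_mul (Kre_nonneg hp t)]
            ring
        _ = (‖F t‖₊ : ℝ≥0∞)^2 * ENNReal.ofReal ((u t)^2 * ρ t ^ 2) := by
            rw [hreal]
        _ = ((‖F t‖₊ : ℝ≥0∞)^2 * (ENNReal.ofReal (u t))^2) *
              ENNReal.ofReal (ρ t ^ 2) := by
            rw [ENNReal.ofReal_mul (sq_nonneg _), ENNReal.ofReal_pow hunn]
            ring
    have step6 : (∫⁻ t, ((‖F t‖₊ : ℝ≥0∞)^2 * W t) * ENNReal.ofReal (ρ t ^ 2) ∂m)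
        = ∫⁻ t, (‖F t‖₊ : ℝ≥0∞)^2 * W t ∂μ := by
      rw [hμ, lintegral_withDensity_eq_lintegral_mul₀' (μ := m) hD_meas.aemeasurable
        (by rw [← hμ]; exact (hF.enorm.pow_const 2).mul hW_meas.aemeasurable)]
      apply lintegral_congr
      intro t
      simp only [Pi.mul_apply]
      ring
    rw [step1, step2, step3, step4, step5, step6]
  -- norm formula
  have hnorm : ∀ f : Lp ℂ 2 μ, (eLpNorm ((T f : ℂ → ℂ)) 2 μ)^2
      = ∫⁻ t, (‖(f : ℂ → ℂ) t‖₊ : ℝ≥0∞)^2 * W t ∂μ := by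
    intro f
    rw [eLpNorm_congr_ae (hT f), eLpNorm_two_sq, hKI f]
  -- lower bound
  have hlow : ∀ r : ℝ≥0, (r:ℝ≥0∞) < E → (r:ℝ≥0∞) ≤ ENNReal.ofReal ‖T‖ := by
    intro r hr
    set A := {t : ℂ | (r:ℝ≥0∞) < ENNReal.ofReal (u t)} with hA
    have hAmeas : MeasurableSet A :=
      measurableSet_lt measurable_const (ENNReal.measurable_ofReal.comp hu_meas)
    have hmA : m A ≠ 0 := by
      intro h0
      have hle : E ≤ (r:ℝ≥0∞) := by
        rw [hE, essSup_eq_sInf]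
        exact csInf_le (OrderBot.bddBelow _) h0
      exact absurd hr (not_lt.mpr hle)
    have hμA : μ A ≠ 0 := fun h0 => hmA (hac2 h0)
    have hμAfin : μ A ≠ ⊤ := measure_ne_top μ A
    set g : Lp ℂ 2 μ := indicatorConstLp 2 hAmeas hμAfin (1:ℂ) with hg
    have hgnorm : ‖g‖ = (μ A).toReal ^ (1/2 : ℝ) := by
      rw [hg, norm_indicatorConstLp two_ne_zero ENNReal.ofNat_ne_top]
      simp [Measure.real]
    have hgpos : 0 < ‖g‖ := by
      rw [hgnorm]
      exact Real.rpow_pos_of_pos (ENNReal.toReal_pos hμA hμAfin) _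
    have hIg : (r:ℝ≥0∞)^2 * μ A ≤ ∫⁻ t, (‖(g : ℂ → ℂ) t‖₊ : ℝ≥0∞)^2 * W t ∂μ := by
      have hgc := indicatorConstLp_coeFn (p := 2) (μ := μ) (hs := hAmeas)
        (hμs := hμAfin) (c := (1:ℂ))
      have hcongr : (fun t => (‖(g : ℂ → ℂ) t‖₊ : ℝ≥0∞)^2 * W t)
          =ᵐ[μ] fun t => A.indicator W t := by
        filter_upwards [hgc] with t ht
        rw [ht]
        by_cases h : t ∈ A <;> simp [Set.indicator_apply, h]
      rw [lintegral_congr_ae hcongr, lintegral_indicator hAmeas]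
      calc (r:ℝ≥0∞)^2 * μ A = ∫⁻ _ in A, (r:ℝ≥0∞)^2 ∂μ := by
            rw [setLIntegral_const]
        _ ≤ ∫⁻ t in A, W t ∂μ := by
            refine setLIntegral_mono' hAmeas (fun t ht => ?_)
            rw [hW]
            simp only
            exact pow_le_pow_left' (le_of_lt ht) 2
    have h1 : (r:ℝ≥0∞)^2 * μ A ≤ (eLpNorm ((T g : ℂ → ℂ)) 2 μ)^2 := by
      rw [hnorm g]; exact hIg
    have hfin : eLpNorm ((T g : ℂ → ℂ)) 2 μ ≠ ⊤ := Lp.eLpNorm_ne_top (T g)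
    have h2 : (r:ℝ)^2 * (μ A).toReal ≤ ‖T g‖^2 := by
      have h3 := ENNReal.toReal_mono (by
        exact ENNReal.pow_ne_top hfin) h1
      rw [ENNReal.toReal_mul, ENNReal.toReal_pow, ENNReal.toReal_pow] at h3
      simpa [Lp.norm_def] using h3
    have h3 : (r:ℝ) * ‖g‖ ≤ ‖T g‖ := by
      have hab : ((r:ℝ) * ‖g‖)^2 ≤ ‖T g‖^2 := by
        rw [mul_pow, hgnorm, ← Real.rpow_natCast ((μ A).toReal ^ (1/2:ℝ)) 2,
          ← Real.rpow_mul ENNReal.toReal_nonneg]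
        norm_num
        exact h2
      have hs := Real.sqrt_le_sqrt hab
      rwa [Real.sqrt_sq (by positivity), Real.sqrt_sq (norm_nonneg _)] at hs
    have h4 : (r:ℝ) ≤ ‖T‖ := by
      have h5 := T.le_opNorm g
      have h6 : (r:ℝ) * ‖g‖ ≤ ‖T‖ * ‖g‖ := le_trans h3 h5
      exact le_of_mul_le_mul_right h6 hgpos
    calc (r:ℝ≥0∞) = ENNReal.ofReal (r:ℝ) := (ENNReal.ofReal_coe_nnreal).symm
      _ ≤ ENNReal.ofReal ‖T‖ := ENNReal.ofReal_le_ofReal h4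
  have hElow : E ≤ ENNReal.ofReal ‖T‖ := ENNReal.le_of_forall_nnreal_lt hlow
  have hEne : E ≠ ⊤ := by
    intro hEtop
    rw [hEtop, top_le_iff] at hElow
    exact ENNReal.ofReal_ne_top hElow
  have hup : ENNReal.ofReal ‖T‖ ≤ E := by
    have hWE : ∀ᵐ t ∂μ, W t ≤ E^2 := by
      have hbase : ∀ᵐ t ∂m, ENNReal.ofReal (u t) ≤ E := ENNReal.ae_le_essSup _
      have hbase' : ∀ᵐ t ∂μ, ENNReal.ofReal (u t) ≤ E :=
        Filter.Eventually.filter_mono hac1.ae_le hbase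
      filter_upwards [hbase'] with t ht
      rw [hW]
      simp only
      exact pow_le_pow_left' ht 2
    have hbound : ∀ f : Lp ℂ 2 μ, ‖T f‖ ≤ E.toReal * ‖f‖ := by
      intro f
      have hF : AEStronglyMeasurable (f : ℂ → ℂ) μ := Lp.aestronglyMeasurable f
      have h1 : (eLpNorm ((T f : ℂ → ℂ)) 2 μ)^2 ≤ (E * eLpNorm ((f : ℂ → ℂ)) 2 μ)^2 := by
        rw [hnorm f, mul_pow, eLpNorm_two_sq]
        calc ∫⁻ t, (‖(f : ℂ → ℂ) t‖₊ : ℝ≥0∞)^2 * W t ∂μ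
            ≤ ∫⁻ t, (‖(f : ℂ → ℂ) t‖₊ : ℝ≥0∞)^2 * E^2 ∂μ :=
              lintegral_mono_ae (hWE.mono fun t ht => mul_le_mul_right ht _)
          _ = E^2 * ∫⁻ t, (‖(f : ℂ → ℂ) t‖₊ : ℝ≥0∞)^2 ∂μ := by
              rw [lintegral_mul_const'' (f := fun t => (‖(f : ℂ → ℂ) t‖₊ : ℝ≥0∞)^2) _ (hF.enorm.pow_const 2)]
              rw [mul_comm]
      have h2 : eLpNorm ((T f : ℂ → ℂ)) 2 μ ≤ E * eLpNorm ((f : ℂ → ℂ)) 2 μ :=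
        pow_two_le_rev h1
      calc ‖T f‖ = (eLpNorm ((T f : ℂ → ℂ)) 2 μ).toReal := Lp.norm_def _
        _ ≤ (E * eLpNorm ((f : ℂ → ℂ)) 2 μ).toReal :=
            ENNReal.toReal_mono (ENNReal.mul_ne_top hEne (Lp.eLpNorm_ne_top f)) h2
        _ = E.toReal * ‖f‖ := by rw [ENNReal.toReal_mul, Lp.norm_def]
    have h3 : ‖T‖ ≤ E.toReal := T.opNorm_le_bound ENNReal.toReal_nonneg hbound
    calc ENNReal.ofReal ‖T‖ ≤ ENNReal.ofReal E.toReal := ENNReal.ofReal_le_ofReal h3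
      _ = E := ENNReal.ofReal_toReal hEne
  exact le_antisymm hup hElow
end
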